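/- (Lemma 3: the modal context tree determines satisfaction.) Let M be the model of an interpreted system with regular labelling and φ an EHS⁺_{AB̄N} formula (an EHS⁺ formula whose modalities are all among K_i, C_Γ, ⟨A⟩, ⟨B̄⟩, ⟨N⟩). If I and I' are intervals of M with MCT_I^φ = MCT_{I'}^φ, then M,I ⊨ φ if and only if M,I' ⊨ φ. -/

import Mathlib

/-- The Halpern-Shoham interval modalities. -/
inductive HSMod : Type where
  | A | Abar | B | Bbar | D | Dbar | E | Ebar | L | Lbar | N | Nbar | O | Obar
  deriving DecidableEq

/-- Formulas of the logic EHS⁺ over agents `0,…,m` and propositional variables `V`. -/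
inductive EHSFormula (m : ℕ) (V : Type) : Type where
  | pt : EHSFormula m V
  | prop : V → EHSFormula m V
  | neg : EHSFormula m V → EHSFormula m V
  | conj : EHSFormula m V → EHSFormula m V → EHSFormula m V
  | know : Fin (m + 1) → EHSFormula m V → EHSFormula m V
  | common : Finset (Fin (m + 1)) → EHSFormula m V → EHSFormula m V
  | dia : HSMod → EHSFormula m V → EHSFormula m V
  deriving DecidableEq

/-- An interpreted system with regular labelling over agents `0,…,m` (agent `0` is the
environment) and variables `Var`. -/
structure ISRL (m : ℕ) (Var : Type) where
  L : Fin (m + 1) → Type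
  finL : ∀ i, Fintype (L i)
  l0 : ∀ i, L i
  ACT : Fin (m + 1) → Type
  finACT : ∀ i, Fintype (ACT i)
  P : ∀ i, L i → Set (ACT i)
  T : ∀ i, L i → (∀ j, ACT j) → L i → Prop
  lab : Var → RegularExpression (∀ i, L i)

attribute [instance] ISRL.finL ISRL.finACT

namespace ISRL

variable {m : ℕ} {Var : Type}

/-- Global configurations. -/
abbrev G (IS : ISRL m Var) : Type := ∀ i, IS.L i

instance (IS : ISRL m Var) : Fintype IS.G := Pi.instFintype

/-- The initial global configuration. -/
def g0 (IS : ISRL m Var) : IS.G := IS.l0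

/-- The global transition relation `t^G`. -/
def tG (IS : ISRL m Var) (g g' : IS.G) : Prop :=
  ∃ a : ∀ j, IS.ACT j, ∀ i, a i ∈ IS.P i (g i) ∧ IS.T i (g i) a (g' i)

/-- A partial state: a nonempty `t^G`-chain of configurations. -/
def IsPState (IS : ISRL m Var) (w : List IS.G) : Prop :=
  w ≠ [] ∧ w.Chain' IS.tG

/-- A global state of the model: a partial state starting at the initial configuration. -/
def IsState (IS : ISRL m Var) (w : List IS.G) : Prop :=
  IS.IsPState w ∧ w.head? = some IS.g0

/-- `g(s)`: the actual configuration of a (partial) state, i.e. its last configuration. -/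
def gOf (IS : ISRL m Var) (w : List IS.G) : IS.G := w.getLastD IS.g0

/-- The global transition relation `t` of the model: extension by exactly one configuration. -/
def step (IS : ISRL m Var) (w w' : List IS.G) : Prop := ∃ g : IS.G, w' = w ++ [g]

/-- Epistemic indistinguishability of states for agent `i`. -/
def simS (IS : ISRL m Var) (i : Fin (m + 1)) (w w' : List IS.G) : Prop :=
  IS.gOf w i = IS.gOf w' i

/-- An interval of the model: a nonempty `t`-path of global states. -/
def IsInterval (IS : ISRL m Var) (l : List (List IS.G)) : Prop :=
  l ≠ [] ∧ (∀ w ∈ l, IS.IsState w) ∧ l.Chain' IS.step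

/-- Intervals of the model of `IS`. -/
structure Interval (IS : ISRL m Var) : Type where
  seq : List (List IS.G)
  isInterval : IS.IsInterval seq

namespace Interval

variable {IS : ISRL m Var}

/-- `first(I)`. -/
def first (I : Interval IS) : List IS.G := I.seq.headD []

/-- `last(I)`. -/
def last (I : Interval IS) : List IS.G := I.seq.getLastD []

/-- `I` is a point interval. -/
def isPt (I : Interval IS) : Prop := I.seq.length = 1

/-- `g(I)`, the word of configurations read along `I`. -/
def gword (I : Interval IS) : List IS.G := I.seq.map IS.gOf

end Interval

section rels

variable {IS : ISRL m Var}

def relA (I I' : Interval IS) : Prop := I'.first = I.last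
def relB (I I' : Interval IS) : Prop :=
  ∃ J : List (List IS.G), J ≠ [] ∧ I.seq = I'.seq ++ J
def relD (I I' : Interval IS) : Prop :=
  ∃ J K : List (List IS.G), J ≠ [] ∧ K ≠ [] ∧ I.seq = J ++ I'.seq ++ K
def relE (I I' : Interval IS) : Prop :=
  ∃ J : List (List IS.G), J ≠ [] ∧ I.seq = J ++ I'.seq
def relL (I I' : Interval IS) : Prop := Relation.TransGen IS.step I.last I'.first
def relN (I I' : Interval IS) : Prop := IS.step I.last I'.first
def relO (I I' : Interval IS) : Prop :=
  ∃ J K : List (List IS.G), J ≠ [] ∧ K ≠ [] ∧ I.seq ++ J = K ++ I'.seq ∧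
    IS.IsInterval (I.seq ++ J)

end rels

/-- The Allen relations on intervals of the model of `IS`. -/
def hsRel (IS : ISRL m Var) : HSMod → Interval IS → Interval IS → Prop
  | .A => fun I I' => relA I I'
  | .Abar => fun I I' => relA I' I
  | .B => fun I I' => relB I I'
  | .Bbar => fun I I' => relB I' I
  | .D => fun I I' => relD I I'
  | .Dbar => fun I I' => relD I' I
  | .E => fun I I' => relE I I'
  | .Ebar => fun I I' => relE I' I
  | .L => fun I I' => relL I I'
  | .Lbar => fun I I' => relL I' I
  | .N => fun I I' => relN I I'
  | .Nbar => fun I I' => relN I' I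
  | .O => fun I I' => relO I I'
  | .Obar => fun I I' => relO I' I

/-- Epistemic indistinguishability of intervals for agent `i`. -/
def simI (IS : ISRL m Var) (i : Fin (m + 1)) (I I' : Interval IS) : Prop :=
  List.Forall₂ (IS.simS i) I.seq I'.seq

/-- `∼_Γ`: the transitive closure of the union of the `∼_i`, `i ∈ Γ`. -/
def simC (IS : ISRL m Var) (Γ : Finset (Fin (m + 1))) : Interval IS → Interval IS → Prop :=
  Relation.TransGen (fun I I' => ∃ i ∈ Γ, IS.simI i I I')

/-- Satisfaction of EHS⁺ formulas at an interval, with respect to a labelling `lab`. -/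
def Sat (IS : ISRL m Var) {W : Type} (lab : W → RegularExpression IS.G) :
    EHSFormula m W → Interval IS → Prop
  | .pt, I => I.isPt
  | .prop p, I => I.gword ∈ (lab p).matches'
  | .neg φ, I => ¬ Sat IS lab φ I
  | .conj φ ψ, I => Sat IS lab φ I ∧ Sat IS lab ψ I
  | .know i φ, I => ∀ I', IS.simI i I' I → Sat IS lab φ I'
  | .common Γ φ, I => ∀ I', IS.simC Γ I' I → Sat IS lab φ I'
  | .dia X φ, I => ∃ I', IS.hsRel X I I' ∧ Sat IS lab φ I'

end ISRL

/-- The `AB̄N` fragment of EHS⁺: all modalities are among `K_i`, `C_Γ`, `⟨A⟩`, `⟨B̄⟩`, `⟨N⟩`. -/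
def IsABN {m : ℕ} {V : Type} : EHSFormula m V → Prop
  | .pt => True
  | .prop _ => True
  | .neg φ => IsABN φ
  | .conj φ ψ => IsABN φ ∧ IsABN ψ
  | .know _ φ => IsABN φ
  | .common _ φ => IsABN φ
  | .dia X φ => (X = HSMod.A ∨ X = HSMod.Bbar ∨ X = HSMod.N) ∧ IsABN φ

/-- A size function on formulas (used as a termination measure). -/
def fsize {m : ℕ} {V : Type} : EHSFormula m V → ℕ
  | .pt => 1
  | .prop _ => 1
  | .neg φ => fsize φ + 1
  | .conj φ ψ => fsize φ + fsize ψ + 1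
  | .know _ φ => fsize φ + 1
  | .common _ φ => fsize φ + 1
  | .dia _ φ => fsize φ + 1

/-- The set of top-level subformulas of a formula: modal subformulas not in the scope of
any modality. -/
def TL {m : ℕ} {V : Type} [DecidableEq V] : EHSFormula m V → Finset (EHSFormula m V)
  | .pt => ∅
  | .prop _ => ∅
  | .neg φ => TL φ
  | .conj φ ψ => TL φ ∪ TL ψ
  | .know i φ => {EHSFormula.know i φ}
  | .common Γ φ => {EHSFormula.common Γ φ}
  | .dia X φ => {EHSFormula.dia X φ}

/-- The body of a (modal) formula. -/
def body {m : ℕ} {V : Type} : EHSFormula m V → EHSFormula m V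
  | .pt => .pt
  | .prop p => .prop p
  | .neg φ => .neg φ
  | .conj φ ψ => .conj φ ψ
  | .know _ φ => φ
  | .common _ φ => φ
  | .dia _ φ => φ

theorem fsize_body_lt {m : ℕ} {V : Type} [DecidableEq V] (φ : EHSFormula m V) :
    ∀ χ ∈ TL φ, fsize (body χ) < fsize φ := by
  induction φ with
  | pt => simp [TL]
  | prop p => simp [TL]
  | neg φ ih =>
      intro χ hχ
      have := ih χ hχ
      simp only [fsize]
      omega
  | conj φ ψ ih1 ih2 =>
      intro χ hχ
      simp only [TL, Finset.mem_union] at hχ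
      rcases hχ with h | h
      · have := ih1 χ h; simp only [fsize]; omega
      · have := ih2 χ h; simp only [fsize]; omega
  | know i φ ih =>
      intro χ hχ
      simp only [TL, Finset.mem_singleton] at hχ
      subst hχ
      simp only [body, fsize]
      omega
  | common Γ φ ih =>
      intro χ hχ
      simp only [TL, Finset.mem_singleton] at hχ
      subst hχ
      simp only [body, fsize]
      omega
  | dia X φ ih =>
      intro χ hχ
      simp only [TL, Finset.mem_singleton] at hχ
      subst hχ
      simp only [body, fsize]
      omega

/-- The function `f(φ) = base · ∏_{Xψ top-level subformula of φ} 2^{f(ψ)}`, where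
`base = 2·|G|²·∏_{p ∈ Var} |Q_p|` is supplied as a parameter. -/
def fval {m : ℕ} {V : Type} [DecidableEq V] (base : ℕ) (φ : EHSFormula m V) : ℕ :=
  base * ∏ χ ∈ (TL φ).attach, 2 ^ fval base (body χ.1)
termination_by fsize φ
decreasing_by exact fsize_body_lt φ χ.1 χ.2

namespace ISRL

variable {m : ℕ} {Var : Type}

/-- The relation on intervals associated with a top-level (modal) subformula:
`R_{K_i} = ∼_i`, `R_{C_Γ} = ∼_Γ`, and `R_{⟨X⟩} = R_X`. -/
def modRel (IS : ISRL m Var) {W : Type} : EHSFormula m W → Interval IS → Interval IS → Prop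
  | .know i _ => IS.simI i
  | .common Γ _ => IS.simC Γ
  | .dia X _ => IS.hsRel X
  | _ => fun _ _ => False

/-- Equality of the modal context trees `MCT_I^φ = MCT_{I'}^φ`, expressed recursively:
the root labels `(g(first(I)), g(last(I)), pi(I), 𝒜_{g(I)})` coincide, and for every
top-level subformula `Xψ` of `φ` the sets of subtrees `{MCT_J^ψ : I R_X J}` and
`{MCT_{J'}^ψ : I' R_X J'}` coincide. -/
def MCTEq (IS : ISRL m Var) [DecidableEq Var] (Q : Var → Type) (dfa : ∀ p, DFA IS.G (Q p))
    (φ : EHSFormula m Var) (I I' : Interval IS) : Prop :=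
  IS.gOf I.first = IS.gOf I'.first ∧
  IS.gOf I.last = IS.gOf I'.last ∧
  (I.isPt ↔ I'.isPt) ∧
  (∀ p, (dfa p).eval I.gword = (dfa p).eval I'.gword) ∧
  (∀ χ ∈ TL φ,
    (∀ J, IS.modRel χ I J → ∃ J', IS.modRel χ I' J' ∧ MCTEq IS Q dfa (body χ) J J') ∧
    (∀ J', IS.modRel χ I' J' → ∃ J, IS.modRel χ I J ∧ MCTEq IS Q dfa (body χ) J J'))
termination_by fsize φ
decreasing_by all_goals exact fsize_body_lt φ _ (by assumption)

end ISRL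

section Aux

open ISRL

variable {m : ℕ} {Var : Type} [DecidableEq Var] {IS : ISRL m Var}

lemma simI_symm {i : Fin (m + 1)} {I J : Interval IS} (h : IS.simI i I J) : IS.simI i J I :=
  (h.imp (fun h' => h'.symm : ∀ {a b}, IS.simS i a b → flip (IS.simS i) a b)).flip

lemma simC_symm {Γ : Finset (Fin (m + 1))} {I J : Interval IS} (h : IS.simC Γ I J) :
    IS.simC Γ J I := by
  induction h with
  | single h => exact Relation.TransGen.single ⟨h.choose, h.choose_spec.1, simI_symm h.choose_spec.2⟩
  | tail _ h ih =>
      exact Relation.TransGen.head ⟨h.choose, h.choose_spec.1, simI_symm h.choose_spec.2⟩ ih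

lemma MCTEq_mono {Q : Var → Type} {dfa : ∀ p, DFA IS.G (Q p)} {φ ψ : EHSFormula m Var}
    (hsub : TL ψ ⊆ TL φ) {I I' : Interval IS} (h : MCTEq IS Q dfa φ I I') :
    MCTEq IS Q dfa ψ I I' := by
  rw [MCTEq] at h ⊢
  exact ⟨h.1, h.2.1, h.2.2.1, h.2.2.2.1, fun χ hχ => h.2.2.2.2 χ (hsub hχ)⟩

lemma MCTEq_symm {Q : Var → Type} {dfa : ∀ p, DFA IS.G (Q p)} (φ : EHSFormula m Var)
    {I I' : Interval IS} (h : MCTEq IS Q dfa φ I I') : MCTEq IS Q dfa φ I' I := by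
  rw [MCTEq] at h ⊢
  refine ⟨h.1.symm, h.2.1.symm, h.2.2.1.symm, fun p => (h.2.2.2.1 p).symm, fun χ hχ => ?_⟩
  obtain ⟨h1, h2⟩ := h.2.2.2.2 χ hχ
  constructor
  · intro J hJ
    obtain ⟨J', hJ', he⟩ := h2 J hJ
    exact ⟨J', hJ', MCTEq_symm (body χ) he⟩
  · intro J' hJ'
    obtain ⟨J, hJ, he⟩ := h1 J' hJ'
    exact ⟨J, hJ, MCTEq_symm (body χ) he⟩
termination_by fsize φ
decreasing_by all_goals exact fsize_body_lt φ χ hχ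

lemma sat_of_mcteq {Q : Var → Type} {dfa : ∀ p, DFA IS.G (Q p)}
    (hdfa : ∀ p, (dfa p).accepts = (IS.lab p).matches') (φ : EHSFormula m Var)
    {I I' : Interval IS} (h : MCTEq IS Q dfa φ I I') (hs : Sat IS IS.lab φ I) :
    Sat IS IS.lab φ I' := by
  match φ with
  | .pt =>
      rw [MCTEq] at h
      exact h.2.2.1.mp hs
  | .prop p =>
      rw [MCTEq] at h
      simp only [Sat] at hs ⊢
      rw [← hdfa p, DFA.mem_accepts] at hs ⊢
      rw [← h.2.2.2.1 p]
      exact hs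
  | .neg ψ =>
      simp only [Sat] at hs ⊢
      intro hs'
      exact hs (sat_of_mcteq hdfa ψ (MCTEq_symm ψ (MCTEq_mono (by simp [TL]) h)) hs')
  | .conj ψ₁ ψ₂ =>
      simp only [Sat] at hs ⊢
      exact ⟨sat_of_mcteq hdfa ψ₁ (MCTEq_mono (by simp [TL]) h) hs.1,
        sat_of_mcteq hdfa ψ₂ (MCTEq_mono (by simp [TL]) h) hs.2⟩
  | .know i ψ =>
      rw [MCTEq] at h
      obtain ⟨_, h2⟩ := h.2.2.2.2 (.know i ψ) (by simp [TL])
      simp only [Sat] at hs ⊢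
      intro J' hJ'
      obtain ⟨J, hJ, he⟩ := h2 J' (simI_symm hJ')
      exact sat_of_mcteq hdfa ψ he (hs J (simI_symm hJ))
  | .common Γ ψ =>
      rw [MCTEq] at h
      obtain ⟨_, h2⟩ := h.2.2.2.2 (.common Γ ψ) (by simp [TL])
      simp only [Sat] at hs ⊢
      intro J' hJ'
      obtain ⟨J, hJ, he⟩ := h2 J' (simC_symm hJ')
      exact sat_of_mcteq hdfa ψ he (hs J (simC_symm hJ))
  | .dia X ψ =>
      rw [MCTEq] at h
      obtain ⟨h1, _⟩ := h.2.2.2.2 (.dia X ψ) (by simp [TL])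
      simp only [Sat] at hs ⊢
      obtain ⟨J, hJ, hsJ⟩ := hs
      obtain ⟨J', hJ', he⟩ := h1 J hJ
      exact ⟨J', hJ', sat_of_mcteq hdfa ψ he hsJ⟩
termination_by fsize φ
decreasing_by all_goals (simp [fsize]; try omega)

end Aux

open ISRL in
/-- Lemma 3: the modal context tree determines satisfaction.  If `I` and `I'`
are intervals of the model `M` with `MCT_I^φ = MCT_{I'}^φ`, then `M,I ⊨ φ` iff `M,I' ⊨ φ`. -/
theorem stmt8 {m : ℕ} {Var : Type} [Fintype Var] [DecidableEq Var] (IS : ISRL m Var)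
    (Q : Var → Type) [∀ p, Fintype (Q p)] (dfa : ∀ p, DFA IS.G (Q p))
    (hdfa : ∀ p, (dfa p).accepts = (IS.lab p).matches')
    (φ : EHSFormula m Var) (hφ : IsABN φ)
    (I I' : ISRL.Interval IS) (h : MCTEq IS Q dfa φ I I') :
    Sat IS IS.lab φ I ↔ Sat IS IS.lab φ I' :=
  ⟨sat_of_mcteq hdfa φ h, sat_of_mcteq hdfa φ (MCTEq_symm φ h)⟩
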